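/- On an affine special Kähler manifold, if (Zⁱ) and (Z_i) are a conjugate system of holomorphic special coordinates and τᵢⱼ is defined by dZ_i = τᵢⱼ dZʲ, then τᵢⱼ is symmetric in i and j, and locally there exists a holomorphic function 𝔉 (the prepotential) with Z_i = ∂𝔉/∂Zⁱ and τᵢⱼ = ∂²𝔉/∂Zⁱ∂Zʲ; moreover the Kähler form satisfies ω = (i/2)·Im(τᵢⱼ)·dZⁱ ∧ dZ̄ʲ. -/

import Mathlib

set_option maxHeartbeats 1000000

lemma sum_antisym {n : ℕ} (f : Fin n → Fin n → ℂ) (h : ∀ i j, f i j = - f j i) :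
    ∑ i, ∑ j, f i j = 0 := by
  have h2 : ∑ i, ∑ j, f i j = -∑ i, ∑ j, f i j := by
    nth_rewrite 1 [Finset.sum_comm]
    rw [← Finset.sum_neg_distrib]
    exact Finset.sum_congr rfl fun i _ => by
      rw [← Finset.sum_neg_distrib]
      exact Finset.sum_congr rfl fun j _ => (h j i)
  linear_combination h2 / 2

lemma key_alg {n : ℕ} (τ : Fin n → Fin n → ℂ) (hsym : ∀ i j, τ i j = τ j i) (u w : Fin n → ℂ) :
    ((∑ i, ((u i).re * (-(∑ j, τ i j * w j)).re - (w i).re * (-(∑ j, τ i j * u j)).re) : ℝ) : ℂ)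
    = Complex.I / 2 * ∑ i, ∑ j, ((τ i j).im : ℂ) *
        (u i * (starRingEnd ℂ) (w j) - w i * (starRingEnd ℂ) (u j)) := by
  have hL0 : ∀ i, ((u i).re * (-(∑ j, τ i j * w j)).re - (w i).re * (-(∑ j, τ i j * u j)).re)
      = ∑ j, ((u i).re * (-(τ i j * w j)).re - (w i).re * (-(τ i j * u j)).re) := by
    intro i
    simp only [Complex.neg_re, Complex.re_sum, mul_neg, ← Finset.sum_neg_distrib,
      Finset.mul_sum, ← Finset.sum_sub_distrib]
  simp_rw [hL0]
  push_cast
  rw [Finset.mul_sum]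
  simp_rw [Finset.mul_sum]
  rw [← sub_eq_zero, ← Finset.sum_sub_distrib]
  simp_rw [← Finset.sum_sub_distrib]
  apply sum_antisym
  intro i j
  rw [hsym j i]
  simp only [Complex.ext_iff, Complex.mul_re, Complex.mul_im, Complex.neg_re, Complex.neg_im,
    Complex.sub_re, Complex.sub_im, Complex.ofReal_re, Complex.ofReal_im, Complex.I_re,
    Complex.I_im, Complex.div_re, Complex.div_im, Complex.conj_re, Complex.conj_im,
    Complex.normSq_ofNat, Complex.re_ofNat, Complex.im_ofNat]
  constructor <;> ring


lemma tau_symm {n : ℕ} (τ : Fin n → Fin n → ℂ) (ω : (Fin n → ℂ) → (Fin n → ℂ) → ℝ)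
    (hD : ∀ u w, ω u w = ∑ i, ((u i).re * (-(∑ j, τ i j * w j)).re
        - (w i).re * (-(∑ j, τ i j * u j)).re))
    (h11 : ∀ u w, ω (fun i => Complex.I * u i) (fun i => Complex.I * w i) = ω u w)
    (k l : Fin n) : τ k l = τ l k := by
  have hsingle : ∀ (a : ℂ) (i m : Fin n), (∑ j, τ i j * (a * (Pi.single m 1 : Fin n → ℂ) j)) = a * τ i m := by
    intro a i m
    rw [Finset.sum_eq_single m] <;> simp +contextual [Pi.single_apply, mul_comm, mul_left_comm]
  have hgen : ∀ (a b : ℂ) (k l : Fin n),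
      ω (fun i => a * (Pi.single k 1 : Fin n → ℂ) i) (fun i => b * (Pi.single l 1 : Fin n → ℂ) i)
      = a.re * (-(b * τ k l)).re - b.re * (-(a * τ l k)).re := by
    intro a b k l
    rw [hD, Finset.sum_sub_distrib]
    congr 1
    · rw [Finset.sum_eq_single k] <;>
        simp +contextual [hsingle, Pi.single_apply] <;> exact Or.inl (by ring)
    · rw [Finset.sum_eq_single l] <;>
        simp +contextual [hsingle, Pi.single_apply] <;> exact Or.inl (by ring)
  have key : ∀ (a b : ℂ) (k l : Fin n),
      (Complex.I * a).re * (-(Complex.I * b * τ k l)).re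
        - (Complex.I * b).re * (-(Complex.I * a * τ l k)).re
      = a.re * (-(b * τ k l)).re - b.re * (-(a * τ l k)).re := by
    intro a b k l
    have := h11 (fun i => a * (Pi.single k 1 : Fin n → ℂ) i) (fun i => b * (Pi.single l 1 : Fin n → ℂ) i)
    simp only [← mul_assoc] at this
    rw [hgen, hgen] at this
    exact this
  have hre := key 1 1 k l
  have him := key 1 Complex.I k l
  simp [Complex.ext_iff] at hre him ⊢
  constructor <;> linarith


open MeasureTheory Metric Set

noncomputable section
variable {n : ℕ}

abbrev Hn (n : ℕ) := Fin n → ℂ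

def Pj (i : Fin n) : Hn n →L[ℂ] ℂ := ContinuousLinearMap.proj i

lemma norm_Pj_le (i : Fin n) : ‖(Pj i : Hn n →L[ℂ] ℂ)‖ ≤ 1 :=
  ContinuousLinearMap.opNorm_le_bound _ zero_le_one fun x => by
    simpa [Pj] using norm_le_pi_norm x i

lemma sum_mul_single (f : Fin n → ℂ) (j : Fin n) :
    ∑ x, f x * (Pi.single j 1 : Hn n) x = f j := by
  rw [Finset.sum_eq_single j] <;> simp +contextual [Pi.single_apply]

lemma sum_single_eval (f : Fin n → ℂ) (j : Fin n) :
    (∑ j', f j' • (Pj j' : Hn n →L[ℂ] ℂ)) (Pi.single j 1) = f j := by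
  rw [ContinuousLinearMap.sum_apply]
  rw [Finset.sum_eq_single j] <;>
    simp +contextual [Pj, Pi.single_apply]

end

section Main
variable {n : ℕ}

lemma exists_prepotential {U : Set (Hn n)} (hU : IsOpen U)
    (Zl : Hn n → Fin n → ℂ) (τ : Hn n → Fin n → Fin n → ℂ)
    (hZl : ∀ z ∈ U, ∀ i, HasFDerivAt (fun w => Zl w i)
      (∑ j, τ z i j • (ContinuousLinearMap.proj j : Hn n →L[ℂ] ℂ)) z)
    (hsym : ∀ z ∈ U, ∀ i j, τ z i j = τ z j i)
    (z₀ : Hn n) (hz₀ : z₀ ∈ U) :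
    ∃ V : Set (Hn n), IsOpen V ∧ z₀ ∈ V ∧ V ⊆ U ∧
      ∃ F : Hn n → ℂ, ∀ z ∈ V, HasFDerivAt F
        (∑ i, Zl z i • (ContinuousLinearMap.proj i : Hn n →L[ℂ] ℂ)) z := by
  -- choose δ
  obtain ⟨ε₀, hε₀, hball⟩ := Metric.isOpen_iff.mp hU z₀ hz₀
  set δ : ℝ := ε₀ / 4 with hδdef
  have hδ : 0 < δ := by positivity
  have hKU : closedBall z₀ (2 * δ) ⊆ U := by
    refine subset_trans ?_ hball
    intro x hx
    rw [mem_closedBall] at hx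
    rw [mem_ball]
    linarith
  have hVU : ball z₀ δ ⊆ U := subset_trans (ball_subset_closedBall.trans
    (closedBall_subset_closedBall (by linarith))) hKU
  -- continuity of Zl
  have hcontZi : ∀ i, ContinuousOn (fun w => Zl w i) U := fun i w hw =>
    ((hZl w hw i).differentiableAt.continuousAt).continuousWithinAt
  have hcontZ : ContinuousOn Zl U := by
    rw [continuousOn_pi]; exact hcontZi
  -- bound on Zl
  obtain ⟨M₀, hM₀⟩ := (isCompact_closedBall z₀ (2 * δ)).exists_bound_of_continuousOn
    (hcontZ.mono hKU)
  set M : ℝ := max M₀ 0 with hMdef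
  have hM : ∀ w ∈ closedBall z₀ (2 * δ), ∀ i, ‖Zl w i‖ ≤ M := fun w hw i =>
    (norm_le_pi_norm _ i).trans ((hM₀ w hw).trans (le_max_left _ _))
  have hMnn : 0 ≤ M := le_max_right _ _
  -- Cauchy-Schwarz-type bound on τ
  set Cb : ℝ := (2 * M + 1) / δ with hCbdef
  have hCbnn : 0 ≤ Cb := by positivity
  have hnorm_single : ∀ j : Fin n, ‖(Pi.single j 1 : Hn n)‖ ≤ 1 := by
    intro j
    refine (pi_norm_le_iff_of_nonneg zero_le_one).mpr fun k => ?_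
    simp only [Pi.single_apply]
    split <;> simp
  have hCb : ∀ c ∈ closedBall z₀ δ, ∀ i j, ‖τ c i j‖ ≤ Cb := by
    intro c hc i j
    set e : Hn n := Pi.single j 1 with hedef
    have hmem : ∀ s : ℂ, ‖s‖ ≤ δ → c + s • e ∈ closedBall z₀ (2 * δ) := by
      intro s hs
      rw [mem_closedBall, dist_eq_norm]
      calc ‖c + s • e - z₀‖ = ‖(c - z₀) + s • e‖ := by ring_nf
        _ ≤ ‖c - z₀‖ + ‖s • e‖ := norm_add_le _ _
        _ ≤ δ + ‖s‖ * ‖e‖ := by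
            rw [norm_smul]
            gcongr
            rwa [← dist_eq_norm, ← mem_closedBall]
        _ ≤ δ + δ * 1 := by gcongr; exact hnorm_single j
        _ = 2 * δ := by ring
    set θ : ℂ → ℂ := fun s => Zl (c + s • e) i with hθdef
    have hds : ∀ s : ℂ, ‖s‖ ≤ δ →
        HasDerivAt θ (τ (c + s • e) i j) s := by
      intro s hs
      have hpt : c + s • e ∈ U := hKU (hmem s hs)
      have hline : HasDerivAt (fun s : ℂ => c + s • e) e s := by
        simpa using ((hasDerivAt_id s).smul_const e).const_add c
      have h2 := (hZl _ hpt i).comp_hasDerivAt s hline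
      have h3 : (∑ j', τ (c + s • e) i j' • (ContinuousLinearMap.proj j' : Hn n →L[ℂ] ℂ)) e
          = τ (c + s • e) i j := by
        rw [ContinuousLinearMap.sum_apply]
        simp only [ContinuousLinearMap.smul_apply, ContinuousLinearMap.proj_apply, smul_eq_mul,
          hedef]
        exact sum_mul_single _ j
      rw [h3] at h2
      exact h2
    have hdiff : DifferentiableOn ℂ θ (ball 0 δ) := by
      intro s hs
      exact (hds s (le_of_lt (by simpa [mem_ball, dist_eq_norm] using hs))).differentiableAt.differentiableWithinAt
    have hmaps : MapsTo θ (ball 0 δ) (ball (θ 0) (2 * M + 1)) := by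
      intro s hs
      rw [mem_ball, dist_eq_norm]
      have h1 : ‖θ s‖ ≤ M := by
        apply hM _ (hmem s (le_of_lt (by simpa [mem_ball, dist_eq_norm] using hs)))
      have h2 : ‖θ 0‖ ≤ M := by
        apply hM _ (hmem 0 (by simp [hδ.le]))
      calc ‖θ s - θ 0‖ ≤ ‖θ s‖ + ‖θ 0‖ := norm_sub_le _ _
        _ < 2 * M + 1 := by linarith
    have hder0 : deriv θ 0 = τ c i j := by
      have := hds 0 (by simpa using hδ.le)
      simpa using this.deriv
    have := Complex.norm_deriv_le_div_of_mapsTo_ball hdiff (hmaps.mono_right ball_subset_closedBall) hδ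
    rw [hder0] at this
    exact this
  classical
  haveI : Fact ((MeasureTheory.volume : Measure ℝ) (Set.Ioc (0:ℝ) 1) < ⊤) := ⟨by simp⟩
  set μ : Measure ℝ := volume.restrict (Set.Ioc (0:ℝ) 1) with hμdef
  set cmap : Hn n → ℝ → Hn n := fun x t => z₀ + t • (x - z₀) with hcmapdef
  have hcsub : ∀ (x : Hn n) (t : ℝ), cmap x t - z₀ = t • (x - z₀) := by
    intro x t
    show z₀ + t • (x - z₀) - z₀ = t • (x - z₀)
    exact add_sub_cancel_left _ _
  have hcmem : ∀ x ∈ ball z₀ δ, ∀ t : ℝ, 0 ≤ t → t ≤ 1 → cmap x t ∈ ball z₀ δ := by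
    intro x hx t ht0 ht1
    rw [mem_ball, dist_eq_norm] at hx ⊢
    calc ‖cmap x t - z₀‖ = |t| * ‖x - z₀‖ := by
          rw [hcsub, norm_smul, Real.norm_eq_abs]
      _ ≤ 1 * ‖x - z₀‖ := by
          gcongr
          rw [abs_of_nonneg ht0]; exact ht1
      _ < δ := by rw [one_mul]; exact hx
  set g : Hn n → ℝ → ℂ := fun x t => ∑ i, Zl (cmap x t) i * (x i - z₀ i) with hgdef
  set F' : Hn n → ℝ → (Hn n →L[ℂ] ℂ) := fun x t =>
    (∑ i, Zl (cmap x t) i • (ContinuousLinearMap.proj i : Hn n →L[ℂ] ℂ))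
    + t • (∑ i, (∑ j, τ (cmap x t) i j * (x j - z₀ j)) •
        (ContinuousLinearMap.proj i : Hn n →L[ℂ] ℂ)) with hF'def
  refine ⟨ball z₀ δ, isOpen_ball, mem_ball_self hδ, hVU,
    fun x => ∫ t, g x t ∂μ, ?_⟩
  intro z hz
  -- the x-derivative of g in the ball
  have hgderiv : ∀ t : ℝ, 0 ≤ t → t ≤ 1 → ∀ x ∈ ball z₀ δ,
      HasFDerivAt (fun y => g y t) (F' x t) x := by
    intro t ht0 ht1 x hx
    have hcm : cmap x t ∈ U := hVU (hcmem x hx t ht0 ht1)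
    have hψ : HasFDerivAt (fun y => cmap y t)
        (t • (ContinuousLinearMap.id ℂ (Hn n))) x := by
      have : HasFDerivAt (fun y : Hn n => z₀ + t • (y - z₀))
          (t • (ContinuousLinearMap.id ℂ (Hn n))) x :=
        (((hasFDerivAt_id x).sub_const z₀).const_smul t).const_add z₀
      exact this
    have hterm : ∀ i, HasFDerivAt (fun y => Zl (cmap y t) i * (y i - z₀ i))
        (Zl (cmap x t) i • (ContinuousLinearMap.proj i : Hn n →L[ℂ] ℂ)
          + (x i - z₀ i) • ((∑ j, τ (cmap x t) i j •
            (ContinuousLinearMap.proj j : Hn n →L[ℂ] ℂ)).comp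
              (t • (ContinuousLinearMap.id ℂ (Hn n))))) x := by
      intro i
      have hA : HasFDerivAt (fun y => Zl (cmap y t) i)
          ((∑ j, τ (cmap x t) i j • (ContinuousLinearMap.proj j : Hn n →L[ℂ] ℂ)).comp
            (t • (ContinuousLinearMap.id ℂ (Hn n)))) x :=
        by have h := (hZl (cmap x t) hcm i).comp x hψ; exact h
      have hB : HasFDerivAt (fun y : Hn n => y i - z₀ i)
          (ContinuousLinearMap.proj i : Hn n →L[ℂ] ℂ) x :=
        (ContinuousLinearMap.proj i : Hn n →L[ℂ] ℂ).hasFDerivAt.sub_const (z₀ i)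
      exact hA.mul hB
    have hsumd := HasFDerivAt.fun_sum (fun i (_ : i ∈ Finset.univ) => hterm i)
    have hclm : (∑ i, (Zl (cmap x t) i • (ContinuousLinearMap.proj i : Hn n →L[ℂ] ℂ)
          + (x i - z₀ i) • ((∑ j, τ (cmap x t) i j •
            (ContinuousLinearMap.proj j : Hn n →L[ℂ] ℂ)).comp
              (t • (ContinuousLinearMap.id ℂ (Hn n)))))) = F' x t := by
      apply ContinuousLinearMap.ext
      intro v
      rw [hF'def]
      simp only [ContinuousLinearMap.sum_apply, ContinuousLinearMap.add_apply,
        ContinuousLinearMap.smul_apply, ContinuousLinearMap.proj_apply,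
        ContinuousLinearMap.coe_comp', Function.comp_apply, ContinuousLinearMap.coe_smul',
        Pi.smul_apply, ContinuousLinearMap.coe_id', id_eq, smul_eq_mul]
      rw [Finset.sum_add_distrib]
      congr 1
      calc ∑ i, (x i - z₀ i) * ∑ j, τ (cmap x t) i j * t • v j
          = ∑ i, ∑ j, τ (cmap x t) i j * ((t:ℂ) * v j) * (x i - z₀ i) := by
            refine Finset.sum_congr rfl fun i _ => ?_
            rw [Finset.mul_sum]
            refine Finset.sum_congr rfl fun j _ => ?_
            rw [Complex.real_smul]; ring
        _ = ∑ i, (∑ j, τ (cmap x t) i j * (x j - z₀ j)) * ((t:ℂ) * v i) := by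
            rw [Finset.sum_comm]
            refine Finset.sum_congr rfl fun i _ => ?_
            rw [Finset.sum_mul]
            refine Finset.sum_congr rfl fun j _ => ?_
            rw [hsym (cmap x t) hcm j i]; ring
        _ = (t : ℝ) • ∑ i, (∑ j, τ (cmap x t) i j * (x j - z₀ j)) * v i := by
            rw [Finset.smul_sum]
            refine Finset.sum_congr rfl fun i _ => ?_
            rw [Complex.real_smul]; ring
    rw [hclm] at hsumd
    exact hsumd
  -- basic data for the parametric integral
  set εz : ℝ := δ - dist z z₀ with hεzdef
  have hzball := mem_ball.mp hz
  have hεpos : 0 < εz := by rw [hεzdef]; linarith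
  have hball_sub : ball z εz ⊆ ball z₀ δ := by
    intro x hx
    rw [mem_ball] at hx ⊢
    calc dist x z₀ ≤ dist x z + dist z z₀ := dist_triangle _ _ _
      _ < εz + dist z z₀ := by linarith
      _ = δ := by rw [hεzdef]; ring
  set C₀ : ℝ := n * M + n * (n * (Cb * δ)) with hC₀def
  have hnormbound : ∀ t : ℝ, 0 ≤ t → t ≤ 1 → ∀ x ∈ ball z₀ δ, ‖F' x t‖ ≤ C₀ := by
    intro t ht0 ht1 x hx
    have hcm : cmap x t ∈ closedBall z₀ (2 * δ) :=
      closedBall_subset_closedBall (by linarith)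
        (ball_subset_closedBall (hcmem x hx t ht0 ht1))
    have hcm1 : cmap x t ∈ closedBall z₀ δ :=
      ball_subset_closedBall (hcmem x hx t ht0 ht1)
    have hxδ : ∀ j, ‖x j - z₀ j‖ ≤ δ := by
      intro j
      calc ‖x j - z₀ j‖ ≤ ‖x - z₀‖ := by
            simpa using norm_le_pi_norm (x - z₀) j
        _ ≤ δ := by
            rw [← dist_eq_norm]
            exact (mem_ball.mp hx).le
    have hb1 : ‖∑ i, Zl (cmap x t) i • (ContinuousLinearMap.proj i : Hn n →L[ℂ] ℂ)‖
        ≤ n * M := by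
      calc ‖∑ i, Zl (cmap x t) i • (ContinuousLinearMap.proj i : Hn n →L[ℂ] ℂ)‖
          ≤ ∑ i : Fin n, ‖Zl (cmap x t) i • (ContinuousLinearMap.proj i : Hn n →L[ℂ] ℂ)‖ :=
            norm_sum_le _ _
        _ ≤ ∑ _i : Fin n, M := by
            refine Finset.sum_le_sum fun i _ => ?_
            refine le_trans (ContinuousLinearMap.opNorm_smul_le _ _) ?_
            calc ‖Zl (cmap x t) i‖ * ‖(ContinuousLinearMap.proj i : Hn n →L[ℂ] ℂ)‖
                ≤ M * 1 := by
                  apply mul_le_mul (hM _ hcm i) (norm_Pj_le i) (norm_nonneg _) hMnn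
              _ = M := mul_one M
        _ = n * M := by simp [Finset.sum_const, mul_comm]
    have hb2 : ‖∑ i, (∑ j, τ (cmap x t) i j * (x j - z₀ j)) •
        (ContinuousLinearMap.proj i : Hn n →L[ℂ] ℂ)‖ ≤ n * (n * (Cb * δ)) := by
      calc ‖∑ i, (∑ j, τ (cmap x t) i j * (x j - z₀ j)) •
            (ContinuousLinearMap.proj i : Hn n →L[ℂ] ℂ)‖
          ≤ ∑ i : Fin n, ‖(∑ j, τ (cmap x t) i j * (x j - z₀ j)) •
            (ContinuousLinearMap.proj i : Hn n →L[ℂ] ℂ)‖ := norm_sum_le _ _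
        _ ≤ ∑ _i : Fin n, n * (Cb * δ) := by
            refine Finset.sum_le_sum fun i _ => ?_
            refine le_trans (ContinuousLinearMap.opNorm_smul_le _ _) ?_
            have hin : ‖∑ j, τ (cmap x t) i j * (x j - z₀ j)‖ ≤ n * (Cb * δ) := by
              calc ‖∑ j, τ (cmap x t) i j * (x j - z₀ j)‖
                  ≤ ∑ j : Fin n, ‖τ (cmap x t) i j * (x j - z₀ j)‖ := norm_sum_le _ _
                _ ≤ ∑ _j : Fin n, Cb * δ := by
                    refine Finset.sum_le_sum fun j _ => ?_
                    rw [norm_mul]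
                    exact mul_le_mul (hCb _ hcm1 i j) (hxδ j) (norm_nonneg _) hCbnn
                _ = n * (Cb * δ) := by simp [Finset.sum_const, mul_comm]
            calc ‖∑ j, τ (cmap x t) i j * (x j - z₀ j)‖ *
                  ‖(ContinuousLinearMap.proj i : Hn n →L[ℂ] ℂ)‖
                ≤ (n * (Cb * δ)) * 1 := by
                  apply mul_le_mul hin (norm_Pj_le i) (norm_nonneg _) (by positivity)
              _ = n * (Cb * δ) := mul_one _
        _ = n * (n * (Cb * δ)) := by simp [Finset.sum_const, mul_comm]
    calc ‖F' x t‖ ≤ ‖∑ i, Zl (cmap x t) i • (ContinuousLinearMap.proj i : Hn n →L[ℂ] ℂ)‖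
          + ‖t • ∑ i, (∑ j, τ (cmap x t) i j * (x j - z₀ j)) •
              (ContinuousLinearMap.proj i : Hn n →L[ℂ] ℂ)‖ := by
          rw [hF'def]; exact norm_add_le _ _
      _ ≤ n * M + 1 * (n * (n * (Cb * δ))) := by
          gcongr
          refine le_trans (ContinuousLinearMap.opNorm_smul_le _ _) ?_
          apply mul_le_mul _ hb2 (norm_nonneg _) zero_le_one
          rw [Real.norm_eq_abs, abs_of_nonneg ht0]; exact ht1
      _ = C₀ := by rw [hC₀def]; ring
  -- continuity in t along the segment
  have hcline : ∀ x : Hn n, Continuous (fun t : ℝ => cmap x t) := by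
    intro x
    rw [hcmapdef]
    exact continuous_const.add (continuous_id.smul continuous_const)
  have hmapsIcc : ∀ x ∈ ball z₀ δ, Set.MapsTo (cmap x) (Set.Icc (0:ℝ) 1) U :=
    fun x hx t ht => hVU (hcmem x hx t ht.1 ht.2)
  have hgcont : ∀ x ∈ ball z₀ δ, ContinuousOn (fun t => g x t) (Set.Icc (0:ℝ) 1) := by
    intro x hx
    rw [hgdef]
    apply continuousOn_finset_sum
    intro i _
    exact (((hcontZi i).comp ((hcline x).continuousOn) (hmapsIcc x hx))).mul continuousOn_const
  have hF_meas : ∀ᶠ x in nhds z, AEStronglyMeasurable (g x) μ := by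
    filter_upwards [isOpen_ball.mem_nhds hz] with x hx
    exact ((hgcont x hx).mono Set.Ioc_subset_Icc_self).aestronglyMeasurable measurableSet_Ioc
  have hF_int : Integrable (g z) μ := by
    have h1 : IntegrableOn (fun t => g z t) (Set.Icc (0:ℝ) 1) volume :=
      (hgcont z hz).integrableOn_compact isCompact_Icc
    exact h1.mono_set Set.Ioc_subset_Icc_self
  have hT : ∀ i j : Fin n, Measurable
      (fun w : Hn n => fderiv ℂ (fun y => Zl y i) w (Pi.single j 1)) :=
    fun i j => measurable_fderiv_apply_const ℂ _ _
  have hTτ : ∀ w ∈ U, ∀ i j : Fin n,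
      fderiv ℂ (fun y => Zl y i) w (Pi.single j 1) = τ w i j := by
    intro w hw i j
    rw [(hZl w hw i).fderiv]
    rw [ContinuousLinearMap.sum_apply]
    simp only [ContinuousLinearMap.smul_apply, ContinuousLinearMap.proj_apply, smul_eq_mul]
    exact sum_mul_single (fun j' => τ w i j') j
  have hF'zmeas : AEStronglyMeasurable (F' z) μ := by
    have h1 : ContinuousOn (fun t : ℝ => ∑ i, Zl (cmap z t) i •
        (ContinuousLinearMap.proj i : Hn n →L[ℂ] ℂ)) (Set.Icc (0:ℝ) 1) := by
      apply continuousOn_finset_sum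
      intro i _
      exact ((hcontZi i).comp ((hcline z).continuousOn) (hmapsIcc z hz)).smul continuousOn_const
    have h1m : AEStronglyMeasurable (fun t : ℝ => ∑ i, Zl (cmap z t) i •
        (ContinuousLinearMap.proj i : Hn n →L[ℂ] ℂ)) μ :=
      (h1.mono Set.Ioc_subset_Icc_self).aestronglyMeasurable measurableSet_Ioc
    have h2m : AEStronglyMeasurable (fun t : ℝ => ∑ i, (∑ j, τ (cmap z t) i j * (z j - z₀ j)) •
        (ContinuousLinearMap.proj i : Hn n →L[ℂ] ℂ)) μ := by
      have hGm : AEStronglyMeasurable (fun t : ℝ => ∑ i,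
          (∑ j, (fderiv ℂ (fun y => Zl y i) (cmap z t) (Pi.single j 1)) * (z j - z₀ j)) •
          (ContinuousLinearMap.proj i : Hn n →L[ℂ] ℂ)) μ := by
        apply Finset.aestronglyMeasurable_fun_sum
        intro i _
        have hms : Measurable (fun t : ℝ =>
            ∑ j, (fderiv ℂ (fun y => Zl y i) (cmap z t) (Pi.single j 1)) * (z j - z₀ j)) := by
          apply Finset.measurable_sum
          intro j _
          exact ((hT i j).comp (hcline z).measurable).mul_const _
        exact hms.aestronglyMeasurable.smul_const _
      refine hGm.congr ?_
      filter_upwards [MeasureTheory.ae_restrict_mem measurableSet_Ioc] with t ht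
      have hcU : cmap z t ∈ U := hVU (hcmem z hz t ht.1.le ht.2)
      refine Finset.sum_congr rfl fun i _ => ?_
      congr 1
      exact Finset.sum_congr rfl fun j _ => by rw [hTτ _ hcU i j]
    have : AEStronglyMeasurable (fun t : ℝ =>
        (∑ i, Zl (cmap z t) i • (ContinuousLinearMap.proj i : Hn n →L[ℂ] ℂ))
        + t • (∑ i, (∑ j, τ (cmap z t) i j * (z j - z₀ j)) •
          (ContinuousLinearMap.proj i : Hn n →L[ℂ] ℂ))) μ :=
      h1m.add (aestronglyMeasurable_id.smul h2m)
    exact this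
  have h_bound : ∀ᵐ t ∂μ, ∀ x ∈ ball z εz, ‖F' x t‖ ≤ C₀ := by
    filter_upwards [MeasureTheory.ae_restrict_mem measurableSet_Ioc] with t ht x hx
    exact hnormbound t ht.1.le ht.2 x (hball_sub hx)
  have hbd_int : Integrable (fun _ : ℝ => C₀) μ := integrable_const _
  have h_diff : ∀ᵐ t ∂μ, ∀ x ∈ ball z εz, HasFDerivAt (fun y => g y t) (F' x t) x := by
    filter_upwards [MeasureTheory.ae_restrict_mem measurableSet_Ioc] with t ht x hx
    exact hgderiv t ht.1.le ht.2 x (hball_sub hx)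
  have main := hasFDerivAt_integral_of_dominated_of_fderiv_le (ball_mem_nhds z hεpos) hF_meas hF_int hF'zmeas
    h_bound hbd_int h_diff
  -- compute the integral of F' z via FTC
  have hSder : ∀ t ∈ Set.Icc (0:ℝ) 1, HasDerivAt (fun s : ℝ => s • (∑ i, Zl (cmap z s) i •
      (ContinuousLinearMap.proj i : Hn n →L[ℂ] ℂ))) (F' z t) t := by
    intro t ht
    have hcU : cmap z t ∈ U := hVU (hcmem z hz t ht.1 ht.2)
    have hline : HasDerivAt (fun s : ℝ => cmap z s) (z - z₀) t := by
      rw [hcmapdef]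
      simpa using ((hasDerivAt_id t).smul_const (z - z₀)).const_add z₀
    have hZi : ∀ i, HasDerivAt (fun s : ℝ => Zl (cmap z s) i)
        (∑ j, τ (cmap z t) i j * (z j - z₀ j)) t := by
      intro i
      have h := ((hZl (cmap z t) hcU i).restrictScalars ℝ).comp_hasDerivAt t hline
      have hval : ((∑ j, τ (cmap z t) i j • (ContinuousLinearMap.proj j : Hn n →L[ℂ] ℂ)).restrictScalars ℝ)
          (z - z₀) = ∑ j, τ (cmap z t) i j * (z j - z₀ j) := by
        rw [ContinuousLinearMap.coe_restrictScalars']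
        rw [ContinuousLinearMap.sum_apply]
        exact Finset.sum_congr rfl fun j _ => by
          simp [ContinuousLinearMap.smul_apply, ContinuousLinearMap.proj_apply]
      rw [hval] at h
      exact h
    have hS : HasDerivAt (fun s : ℝ => ∑ i, Zl (cmap z s) i •
        (ContinuousLinearMap.proj i : Hn n →L[ℂ] ℂ))
        (∑ i, (∑ j, τ (cmap z t) i j * (z j - z₀ j)) •
          (ContinuousLinearMap.proj i : Hn n →L[ℂ] ℂ)) t :=
      HasDerivAt.fun_sum (fun i _ => (hZi i).smul_const (ContinuousLinearMap.proj i : Hn n →L[ℂ] ℂ))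
    have hfinal := (hasDerivAt_id t).smul hS
    have heq : (id t : ℝ) • (∑ i, (∑ j, τ (cmap z t) i j * (z j - z₀ j)) •
          (ContinuousLinearMap.proj i : Hn n →L[ℂ] ℂ))
        + (1:ℝ) • (∑ i, Zl (cmap z t) i • (ContinuousLinearMap.proj i : Hn n →L[ℂ] ℂ))
        = F' z t := by
      rw [hF'def]
      rw [one_smul]
      rw [add_comm]
      rfl
    rw [heq] at hfinal
    exact hfinal
  have hII : IntervalIntegrable (F' z) volume 0 1 := by
    rw [intervalIntegrable_iff, Set.uIoc_of_le zero_le_one]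
    refine ⟨hF'zmeas, ?_⟩
    apply MeasureTheory.HasFiniteIntegral.of_bounded (C := C₀)
    filter_upwards [MeasureTheory.ae_restrict_mem measurableSet_Ioc] with t ht
    exact hnormbound t ht.1.le ht.2 z hz
  have hFTC := intervalIntegral.integral_eq_sub_of_hasDerivAt
    (f := fun s : ℝ => s • (∑ i, Zl (cmap z s) i •
      (ContinuousLinearMap.proj i : Hn n →L[ℂ] ℂ)))
    (by rw [Set.uIcc_of_le zero_le_one]; exact hSder) hII
  have hc1 : cmap z 1 = z := by
    rw [hcmapdef]
    show z₀ + (1:ℝ) • (z - z₀) = z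
    rw [one_smul]
    exact add_sub_cancel _ _
  have hIeq : (∫ t, F' z t ∂μ) = ∑ i, Zl z i •
      (ContinuousLinearMap.proj i : Hn n →L[ℂ] ℂ) := by
    have h0 : (∫ t, F' z t ∂μ) = ∫ t in (0:ℝ)..1, F' z t :=
      (intervalIntegral.integral_of_le zero_le_one).symm
    rw [h0, hFTC]
    simp only [hc1, one_smul]
    rw [show ((0:ℝ) • ∑ i, Zl (cmap z 0) i • (ContinuousLinearMap.proj i : Hn n →L[ℂ] ℂ))
      = 0 from by ext v; simp, sub_zero]
  rw [hIeq] at main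
  exact main


end Main



/- Lemma 2.5 (usualsKident), in a single holomorphic special coordinate chart
(identified with an open set U ⊆ ℂⁿ, coordinates Zⁱ = projections): if
dZ_i = τᵢⱼ dZʲ and ω = dxⁱ∧dy_i with x = Re Z, y = −Re Z_i, and ω is of type
(1,1) (compatible with multiplication by i), then τ is symmetric, locally there
is a holomorphic prepotential 𝔉 with d𝔉 = Z_i dZⁱ (so Z_i = ∂𝔉/∂Zⁱ and
τᵢⱼ = ∂²𝔉/∂Zⁱ∂Zʲ), and ω = (i/2)·Im(τᵢⱼ)·dZⁱ∧dZ̄ʲ. -/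
theorem stmt_3 (n : ℕ)
    (U : Set (Fin n → ℂ)) (hU : IsOpen U)
    (Zl : (Fin n → ℂ) → Fin n → ℂ)
    (τ : (Fin n → ℂ) → Fin n → Fin n → ℂ)
    (hZl : ∀ z ∈ U, ∀ i, HasFDerivAt (fun w => Zl w i)
      (∑ j, τ z i j • (ContinuousLinearMap.proj j : (Fin n → ℂ) →L[ℂ] ℂ)) z)
    (ω : (Fin n → ℂ) → (Fin n → ℂ) → (Fin n → ℂ) → ℝ)
    (hDarboux : ∀ z ∈ U, ∀ u w, ω z u w =
      ∑ i, ((u i).re * (-(∑ j, τ z i j * w j)).re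
        - (w i).re * (-(∑ j, τ z i j * u j)).re))
    (h11 : ∀ z ∈ U, ∀ u w,
      ω z (fun i => Complex.I * u i) (fun i => Complex.I * w i) = ω z u w) :
    (∀ z ∈ U, ∀ i j, τ z i j = τ z j i) ∧
    (∀ z₀ ∈ U, ∃ V : Set (Fin n → ℂ), IsOpen V ∧ z₀ ∈ V ∧ V ⊆ U ∧
      ∃ F : (Fin n → ℂ) → ℂ, ∀ z ∈ V, HasFDerivAt F
        (∑ i, Zl z i • (ContinuousLinearMap.proj i : (Fin n → ℂ) →L[ℂ] ℂ)) z) ∧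
    (∀ z ∈ U, ∀ u w, (ω z u w : ℂ) =
      Complex.I / 2 * ∑ i, ∑ j, ((τ z i j).im : ℂ) *
        (u i * (starRingEnd ℂ) (w j) - w i * (starRingEnd ℂ) (u j))) := by
  have hsym : ∀ z ∈ U, ∀ i j, τ z i j = τ z j i := fun z hz i j =>
    tau_symm (τ z) (ω z) (fun u w => hDarboux z hz u w) (fun u w => h11 z hz u w) i j
  refine ⟨hsym, ?_, ?_⟩
  · intro z₀ hz₀
    exact exists_prepotential hU Zl τ hZl hsym z₀ hz₀
  · intro z hz u w
    rw [hDarboux z hz u w]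
    exact key_alg (τ z) (hsym z hz) u w
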